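/- Let b, d', u ∈ W and α ∈ A. If α T_b T_{d'} T_u ∈ H_{<0}, then α T_{b'} T_{d'} T_{u'} ∈ H_{<0} for all b', u' ∈ W with b'⁻¹ ≤_D b⁻¹ and u' ≤_D u, where ≤_D is the Duflo order: x ≤_D y iff l(x⁻¹ y) = l(y) − l(x). -/

import Mathlib

open scoped Classical TensorProduct

noncomputable section

namespace KL

variable (Γ : Type) [AddCommGroup Γ] [LinearOrder Γ] [IsOrderedAddMonoid Γ]

/-- The group ring `A = ℤ[Γ]`. -/
abbrev A := AddMonoidAlgebra ℤ Γ

variable {Γ}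

/-- The basis element `q^γ` of `A`. -/
def qe (γ : Γ) : A Γ := AddMonoidAlgebra.single γ 1

/-- `A_{<0}`: the ℤ-span of the `q^γ` with `γ < 0`, i.e. elements supported in negative degrees. -/
def Alt0 (Γ : Type) [AddCommGroup Γ] [LinearOrder Γ] [IsOrderedAddMonoid Γ] : Set (A Γ) :=
  {a : A Γ | ∀ γ ∈ a.coeff.support, γ < 0}

/-- The degree of an element of `A` (`⊥` for `0`). -/
def adeg (a : A Γ) : WithBot Γ := a.coeff.support.max

variable {B W : Type} [Group W] {M : CoxeterMatrix B}
variable {H : Type} [Ring H]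

/-- Bundled data of a Coxeter system `(W,S)` together with a positive weight function `L`,
its Hecke algebra `H` over `A = ℤ[Γ]` with standard basis `T`, the bar involution, and the
Kazhdan-Lusztig basis `C`. -/
structure KLData (M : CoxeterMatrix B) (W : Type) [Group W] (Γ : Type)
    [AddCommGroup Γ] [LinearOrder Γ] [IsOrderedAddMonoid Γ] (H : Type) [Ring H] [Algebra (A Γ) H] where
  /-- the Coxeter system -/
  cs : CoxeterSystem M W
  /-- the weight function -/
  L : W → Γ
  L_add : ∀ w w' : W, cs.length (w * w') = cs.length w + cs.length w' →
    L (w * w') = L w + L w'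
  L_pos : ∀ w : W, w ≠ 1 → 0 < L w
  /-- the standard basis `T_w` of the Hecke algebra -/
  bT : Module.Basis W (A Γ) H
  T_mul : ∀ w w' : W, cs.length (w * w') = cs.length w + cs.length w' →
    bT w * bT w' = bT (w * w')
  T_quad : ∀ i : B,
    (bT (cs.simple i) + algebraMap (A Γ) H (qe (-(L (cs.simple i))))) *
      (bT (cs.simple i) - algebraMap (A Γ) H (qe (L (cs.simple i)))) = 0
  /-- the bar involution -/
  bar : H →+* H
  bar_bar : ∀ h : H, bar (bar h) = h
  bar_q : ∀ γ : Γ, bar (algebraMap (A Γ) H (qe γ)) = algebraMap (A Γ) H (qe (-γ))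
  bar_T : ∀ w : W, bar (bT w) * bT w⁻¹ = 1
  bar_T' : ∀ w : W, bT w⁻¹ * bar (bT w) = 1
  /-- the Kazhdan-Lusztig basis `C_w` -/
  bC : Module.Basis W (A Γ) H
  bar_C : ∀ w : W, bar (bC w) = bC w
  C_mod : ∀ w v : W, bT.repr (bC w - bT w) v ∈ Alt0 Γ

namespace KLData

variable [Algebra (A Γ) H] (d : KLData M W Γ H)

/-- `T_w` -/
def T (w : W) : H := d.bT w

/-- `C_w` -/
def C (w : W) : H := d.bC w

/-- `H_{<0} = ⊕_w A_{<0} T_w`. -/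
def Hlt0 : Set H := {h : H | ∀ w : W, d.bT.repr h w ∈ Alt0 Γ}

/-- The structure constants `h_{x,y,z}` of the KL basis. -/
def hk (x y z : W) : A Γ := d.bC.repr (d.C x * d.C y) z

/-- One step of the preorder `≤_L` : `x` appears in `C_z C_y` for some `z`. -/
def leLstep (x y : W) : Prop := ∃ z : W, d.bC.repr (d.C z * d.C y) x ≠ 0

/-- The preorder `≤_L`. -/
def leL : W → W → Prop := Relation.ReflTransGen d.leLstep

/-- `x ~_L y` -/
def simL (x y : W) : Prop := d.leL x y ∧ d.leL y x

/-- `x ≤_R y` -/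
def leR (x y : W) : Prop := d.leL x⁻¹ y⁻¹

/-- `x ~_R y` -/
def simR (x y : W) : Prop := d.simL x⁻¹ y⁻¹

/-- The preorder `≤_LR`, generated by `≤_L` and `≤_R`. -/
def leLR : W → W → Prop :=
  Relation.ReflTransGen (fun x y => d.leLstep x y ∨ d.leLstep x⁻¹ y⁻¹)

/-- `x ~_LR y` -/
def simLR (x y : W) : Prop := d.leLR x y ∧ d.leLR y x

/-- left cells -/
def IsLeftCell (Θ : Set W) : Prop := ∃ x : W, Θ = {y | d.simL x y}

/-- right cells -/
def IsRightCell (Φ : Set W) : Prop := ∃ x : W, Φ = {y | d.simR x y}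

/-- two-sided cells -/
def IsTwoSidedCell (c : Set W) : Prop := ∃ x : W, c = {y | d.simLR x y}

/-- `z < c` for a two-sided cell `c`. -/
def ltc (c : Set W) (z : W) : Prop := z ∉ c ∧ ∀ w ∈ c, d.leLR z w

/-- `z ≤ c` for a two-sided cell `c`. -/
def lec (c : Set W) (z : W) : Prop := ∀ w ∈ c, d.leLR z w

/-- The ideal `H_{<c}`, spanned by the `C_z` with `z < c`. -/
def Hltc (c : Set W) : Submodule (A Γ) H :=
  Submodule.span (A Γ) (d.C '' {z : W | d.ltc c z})

/-- Bruhat order on `W`. -/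
def bruhatLE : W → W → Prop :=
  Relation.ReflTransGen (fun x y => ∃ t : W, d.cs.IsReflection t ∧ y = x * t ∧
    d.cs.length x < d.cs.length y)

/-- Strict Bruhat order on `W`. -/
def bruhatLT (x y : W) : Prop := d.bruhatLE x y ∧ x ≠ y

/-- Duflo order: `x ≤_D y` iff `l(x⁻¹y) = l(y) - l(x)`. -/
def dufloLE (x y : W) : Prop :=
  d.cs.length x + d.cs.length (x⁻¹ * y) = d.cs.length y

/-- The `A`-linear anti-automorphism `♭` of `H` with `T_w ↦ T_{w⁻¹}`. -/
def flat : H →ₗ[A Γ] H := d.bT.constr ℕ (fun w => d.bT w⁻¹)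

/-- `P_{e,z}` : the coefficient of `T_e` in `C_z`. -/
def Pel (z : W) : A Γ := d.bT.repr (d.C z) 1

/-- `Δ(z)`, defined by `P_{e,z} = n_z q^{-Δ(z)} + lower degree terms`. -/
def Del (z : W) : Γ := -(WithBot.unbotD 0 (d.Pel z).coeff.support.max)

/-- `n_z`, defined by `P_{e,z} = n_z q^{-Δ(z)} + lower degree terms`. -/
def nz (z : W) : ℤ := (d.Pel z).coeff (-(d.Del z))

/-- `af : W → Γ` is Lusztig's `a`-function iff for each `z`, `af z` is the (attained)
supremum of the degrees of the `h_{x,y,z}`. -/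
def IsAFunction (af : W → Γ) : Prop :=
  ∀ z : W, (∀ x y : W, adeg (d.hk x y z) ≤ (af z : WithBot Γ)) ∧
    (∃ x y : W, adeg (d.hk x y z) = (af z : WithBot Γ))

/-- `γ_{x,y,z}` : the coefficient of `q^{a(z⁻¹)}` in `h_{x,y,z⁻¹}`. -/
def gam (af : W → Γ) (x y z : W) : ℤ := (d.hk x y z⁻¹).coeff (af z⁻¹)

/-- The set `𝒟 = {z | a(z) = Δ(z)}`. -/
def Dset (af : W → Γ) : Set W := {z : W | af z = d.Del z}

end KLData

variable [Algebra (A Γ) H]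

/-- Assumption (*): a two-sided cell `c` equipped with subsets `D ⊆ c` and
`B_d, U_d ⊆ W` (`d ∈ D`) satisfying conditions (ia)-(iv). -/
structure CellDecomp (d : KLData M W Γ H) (c : Set W) where
  isCell : d.IsTwoSidedCell c
  D : Set W
  Bd : W → Set W
  Ud : W → Set W
  D_sub : D ⊆ c
  -- (ia) : c = c⁻¹ = ⊔_{d ∈ D} B_d d U_d (disjoint union)
  c_inv : ∀ w : W, w ∈ c ↔ w⁻¹ ∈ c
  c_eq : c = ⋃ d0 ∈ D, {w : W | ∃ b ∈ Bd d0, ∃ u ∈ Ud d0, w = b * d0 * u}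
  disj : ∀ d1 ∈ D, ∀ d2 ∈ D, d1 ≠ d2 →
    Disjoint {w : W | ∃ b ∈ Bd d1, ∃ u ∈ Ud d1, w = b * d1 * u}
             {w : W | ∃ b ∈ Bd d2, ∃ u ∈ Ud d2, w = b * d2 * u}
  -- (ib)
  len_add : ∀ d0 ∈ D, ∀ b ∈ Bd d0, ∀ u ∈ Ud d0,
    d.cs.length (b * d0 * u) = d.cs.length b + d.cs.length d0 + d.cs.length u
  -- (ic)
  one_mem_B : ∀ d0 ∈ D, (1 : W) ∈ Bd d0
  one_mem_U : ∀ d0 ∈ D, (1 : W) ∈ Ud d0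
  Binv_sub_U : ∀ d0 ∈ D, ∀ b ∈ Bd d0, b⁻¹ ∈ Ud d0
  -- (id)
  not_mem_c : ∀ d0 ∈ D, ∀ w : W, w ∉ Ud d0 →
    (∀ i : B, d.bruhatLE (d.cs.simple i) d0 →
      d.cs.length (d.cs.simple i * w) = d.cs.length w + 1) → d0 * w ∉ c
  -- (iia) : each d ∈ D is an involution in a finite parabolic subgroup
  d_inv : ∀ d0 ∈ D, d0 * d0 = 1 ∧ d0 ≠ 1
  d_parabolic : ∀ d0 ∈ D, ∃ I : Set B,
    (Subgroup.closure (d.cs.simple '' I) : Set W).Finite ∧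
    d0 ∈ Subgroup.closure (d.cs.simple '' I)
  s_len : ∀ d0 ∈ D, ∀ i : B, d.bruhatLE (d.cs.simple i) d0 →
    ∀ u ∈ Ud d0, d.cs.length (d.cs.simple i * u) = d.cs.length u + 1
  -- (iib)
  TsC : ∀ d0 ∈ D, ∀ i : B, d.bruhatLE (d.cs.simple i) d0 →
    ∃ a : A Γ, d.T (d.cs.simple i) * d.C d0 - a • d.C d0 ∈ d.Hltc c
  -- (iic)
  h_ne : ∀ d0 ∈ D, d.hk d0 d0 d0 ≠ 0
  -- (iii)
  dU_rightCell : ∀ d0 ∈ D, d.IsRightCell {w : W | ∃ u ∈ Ud d0, w = d0 * u}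
  -- (iv)
  TCT : ∀ d0 ∈ D, ∀ b ∈ Bd d0, ∀ u ∈ Ud d0,
    ∃ h0 ∈ d.Hlt0, ∃ h1 ∈ d.Hltc c,
      d.T b * d.C d0 * d.T u - d.T (b * d0 * u) = h0 + h1

namespace CellDecomp

variable {d : KLData M W Γ H} {c : Set W} (cd : CellDecomp d c)

/-- `F` is the element `F_w` : `F = T_w + Σ_{y ∈ U_d, y < w} p_{y,w} T_y` with
`p_{y,w} ∈ A_{<0}`, and `C_d F ≡ C_{dw} mod H_{<c}`. -/
def IsF (d0 w : W) (F : H) : Prop :=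
  (d.bT.repr F w = 1 ∧
    ∀ y : W, y ≠ w → d.bT.repr F y ≠ 0 →
      y ∈ cd.Ud d0 ∧ d.bruhatLT y w ∧ d.bT.repr F y ∈ Alt0 Γ) ∧
  d.C d0 * F - d.C (d0 * w) ∈ d.Hltc c

/-- The right cell `Φ_{b,d} = b d U_d`. -/
def Phi (b d0 : W) : Set W := {x : W | ∃ u ∈ cd.Ud d0, x = b * d0 * u}

/-- The left cell `Θ_{b,d} = Φ_{b,d}⁻¹`. -/
def Theta (b d0 : W) : Set W := {x : W | ∃ u ∈ cd.Ud d0, x = u⁻¹ * d0 * b⁻¹}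

end CellDecomp

/-- The Coxeter matrix of affine type C̃2: generators `s0 s1 s2`,
`(s0 s1)⁴ = (s1 s2)⁴ = (s0 s2)² = 1`. -/
def Ct2 : CoxeterMatrix (Fin 3) where
  M := !![1, 4, 2; 4, 1, 4; 2, 4, 1]
  isSymm := by decide
  diagonal := by decide
  off_diagonal := by intro i i' h; fin_cases i <;> fin_cases i' <;> simp_all

/-- The Coxeter matrix of affine type G̃2: generators `s0 s1 s2`,
`(s0 s1)³ = (s1 s2)⁶ = (s0 s2)² = 1`. -/
def Gt2 : CoxeterMatrix (Fin 3) where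
  M := !![1, 3, 2; 3, 1, 6; 2, 6, 1]
  isSymm := by decide
  diagonal := by decide
  off_diagonal := by intro i i' h; fin_cases i <;> fin_cases i' <;> simp_all

/-- `ξ_γ = q^γ - q^{-γ}`. -/
def xi (γ : Γ) : A Γ := qe γ - qe (-γ)

/-- `η_γ = q^γ + q^{-γ}`. -/
def eta (γ : Γ) : A Γ := qe γ + qe (-γ)


namespace KLData

variable [Algebra (A Γ) H] (d : KLData M W Γ H)

/-- The free `A ⊗_ℤ A`-module with basis `{E_w : w ∈ c}`. -/
abbrev Emod (Γ : Type) [AddCommGroup Γ] [LinearOrder Γ] [IsOrderedAddMonoid Γ] {W : Type} (c : Set W) :=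
  ↥c →₀ (A Γ ⊗[ℤ] A Γ)

/-- `C_x ⬝ E_w = Σ_{z ∈ c} (h_{x,w,z} ⊗ 1) E_z`. -/
def lactB (c : Set W) (x : W) (w : ↥c) : Emod Γ c :=
  Finsupp.mapRange (fun a => a ⊗ₜ[ℤ] (1 : A Γ)) (by simp)
    ((d.bC.repr (d.C x * d.C (w : W))).subtypeDomain (· ∈ c))

/-- The left action of `C_x` on `E`, extended `(A ⊗ A)`-linearly from the basis. -/
def lact (c : Set W) (x : W) (v : Emod Γ c) : Emod Γ c :=
  v.sum fun w t => t • d.lactB c x w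

/-- `E_w ⬝ C_y = Σ_{z ∈ c} (1 ⊗ h_{w,y,z}) E_z`. -/
def ractB (c : Set W) (y : W) (w : ↥c) : Emod Γ c :=
  Finsupp.mapRange (fun a => (1 : A Γ) ⊗ₜ[ℤ] a) (by simp)
    ((d.bC.repr (d.C (w : W) * d.C y)).subtypeDomain (· ∈ c))

/-- The right action of `C_y` on `E`, extended `(A ⊗ A)`-linearly from the basis. -/
def ract (c : Set W) (y : W) (v : Emod Γ c) : Emod Γ c :=
  v.sum fun w t => t • d.ractB c y w

end KLData

end KL

open KL


section S12aux

open Finsupp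

variable {Γ : Type} [AddCommGroup Γ] [LinearOrder Γ] [IsOrderedAddMonoid Γ]

/-- zero, or positive leading coefficient -/
def S12P (a : A Γ) : Prop := a = 0 ∨ ∃ m : Γ, a.coeff.support.max = ↑m ∧ 0 < a.coeff m

lemma S12_le_of_max {a : A Γ} {m : Γ} (h : a.coeff.support.max = ↑m) :
    ∀ γ ∈ a.coeff.support, γ ≤ m := fun γ hγ => by
  have h2 := Finset.le_max hγ
  rw [h] at h2
  exact_mod_cast h2

lemma S12_max_of {a : A Γ} {m : Γ} (hm : a.coeff m ≠ 0) (hb : ∀ γ ∈ a.coeff.support, γ ≤ m) :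
    a.coeff.support.max = ↑m :=
  le_antisymm (Finset.max_le fun γ hγ => WithBot.coe_le_coe.mpr (hb γ hγ))
    (Finset.le_max (Finsupp.mem_support_iff.mpr hm))

lemma S12_coeff_zero {a : A Γ} {m : Γ} (hb : ∀ γ ∈ a.coeff.support, γ ≤ m) {γ : Γ}
    (hγ : m < γ) : a.coeff γ = 0 := by
  by_contra hc
  exact absurd (hb γ (Finsupp.mem_support_iff.mpr hc)) (not_le.mpr hγ)

lemma S12_mul_apply_top {a b : A Γ} {ma mb : Γ} (hma : ∀ γ ∈ a.coeff.support, γ ≤ ma)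
    (hmb : ∀ γ ∈ b.coeff.support, γ ≤ mb) :
    (a * b).coeff (ma + mb) = a.coeff ma * b.coeff mb := by
  rw [AddMonoidAlgebra.coeff_mul]
  have inner : ∀ γ1 ∈ a.coeff.support,
      (Finsupp.sum b.coeff fun γ2 c2 => if γ1 + γ2 = ma + mb then a.coeff γ1 * c2 else 0)
        = if γ1 = ma then a.coeff γ1 * b.coeff mb else 0 := by
    intro γ1 hγ1
    by_cases h1 : γ1 = ma
    · subst h1
      rw [if_pos rfl, Finsupp.sum]
      simp only [add_right_inj]
      rw [Finset.sum_ite_eq' b.coeff.support mb (fun γ2 => a.coeff γ1 * b.coeff γ2)]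
      by_cases h2 : mb ∈ b.coeff.support
      · rw [if_pos h2]
      · rw [if_neg h2, Finsupp.notMem_support_iff.mp h2, mul_zero]
    · rw [if_neg h1, Finsupp.sum]
      apply Finset.sum_eq_zero
      intro γ2 hγ2
      rw [if_neg]
      exact fun hc => absurd hc
        (ne_of_lt (add_lt_add_of_lt_of_le (lt_of_le_of_ne (hma γ1 hγ1) h1) (hmb γ2 hγ2)))
  rw [Finsupp.sum, Finset.sum_congr rfl inner,
    Finset.sum_ite_eq' a.coeff.support ma (fun γ1 => a.coeff γ1 * b.coeff mb)]
  by_cases h2 : ma ∈ a.coeff.support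
  · rw [if_pos h2]
  · rw [if_neg h2, Finsupp.notMem_support_iff.mp h2, zero_mul]

lemma S12_supp_mul_le {a b : A Γ} {ma mb : Γ} (hma : ∀ γ ∈ a.coeff.support, γ ≤ ma)
    (hmb : ∀ γ ∈ b.coeff.support, γ ≤ mb) : ∀ γ ∈ (a * b).coeff.support, γ ≤ ma + mb := by
  intro γ hγ
  have h2 := AddMonoidAlgebra.support_coeff_mul_subset a b hγ
  rw [Finset.mem_add] at h2
  obtain ⟨x, hx, y, hy, rfl⟩ := h2
  exact add_le_add (hma x hx) (hmb y hy)

lemma S12P_zero : S12P (0 : A Γ) := Or.inl rfl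

lemma S12P_one : S12P (1 : A Γ) := by
  right
  refine ⟨0, S12_max_of ?_ ?_, ?_⟩
  · simp [AddMonoidAlgebra.one_def, AddMonoidAlgebra.coeff_single]
  · intro γ hγ
    rw [AddMonoidAlgebra.one_def, AddMonoidAlgebra.coeff_single] at hγ
    have h2 := Finsupp.support_single_subset hγ
    simp only [Finset.mem_singleton] at h2
    exact le_of_eq h2
  · simp [AddMonoidAlgebra.one_def, AddMonoidAlgebra.coeff_single]

lemma S12_add_strong {a b : A Γ} {mb : Γ} (ha : S12P a) (hbmax : b.coeff.support.max = ↑mb)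
    (hbpos : 0 < b.coeff mb) :
    ∃ M : Γ, (a + b).coeff.support.max = ↑M ∧ 0 < (a + b).coeff M ∧ mb ≤ M := by
  rcases ha with rfl | ⟨ma, hamax, hapos⟩
  · exact ⟨mb, by simpa using hbmax, by simpa using hbpos, le_rfl⟩
  have hsupp : ∀ γ ∈ (a + b).coeff.support, γ ≤ max ma mb := by
    intro γ hγ
    rw [AddMonoidAlgebra.coeff_add] at hγ
    rcases Finset.mem_union.mp (Finsupp.support_add hγ) with h | h
    · exact le_trans (S12_le_of_max hamax γ h) (le_max_left _ _)
    · exact le_trans (S12_le_of_max hbmax γ h) (le_max_right _ _)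
  have hpos : 0 < (a + b).coeff (max ma mb) := by
    rcases le_total ma mb with h | h
    · rw [max_eq_right h, AddMonoidAlgebra.coeff_add, Finsupp.add_apply]
      rcases lt_or_eq_of_le h with h' | h'
      · rw [S12_coeff_zero (S12_le_of_max hamax) h', zero_add]; exact hbpos
      · rw [← h'] at hbpos ⊢
        exact add_pos hapos hbpos
    · rw [max_eq_left h, AddMonoidAlgebra.coeff_add, Finsupp.add_apply]
      rcases lt_or_eq_of_le h with h' | h'
      · rw [S12_coeff_zero (S12_le_of_max hbmax) h', add_zero]; exact hapos
      · rw [h'] at hbpos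
        exact add_pos hapos hbpos
  exact ⟨max ma mb, S12_max_of (ne_of_gt hpos) hsupp, hpos, le_max_right _ _⟩

lemma S12P_add {a b : A Γ} (ha : S12P a) (hb : S12P b) : S12P (a + b) := by
  rcases hb with rfl | ⟨mb, hbmax, hbpos⟩
  · simpa using ha
  · obtain ⟨M, h1, h2, _⟩ := S12_add_strong ha hbmax hbpos
    exact Or.inr ⟨M, h1, h2⟩

lemma S12P_mul {a b : A Γ} (ha : S12P a) (hb : S12P b) : S12P (a * b) := by
  rcases ha with rfl | ⟨ma, hamax, hapos⟩
  · rw [zero_mul]; exact S12P_zero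
  rcases hb with rfl | ⟨mb, hbmax, hbpos⟩
  · rw [mul_zero]; exact S12P_zero
  have htop : (a * b).coeff (ma + mb) = a.coeff ma * b.coeff mb :=
    S12_mul_apply_top (S12_le_of_max hamax) (S12_le_of_max hbmax)
  refine Or.inr ⟨ma + mb, S12_max_of ?_ (S12_supp_mul_le (S12_le_of_max hamax) (S12_le_of_max hbmax)), ?_⟩
  · rw [htop]; exact ne_of_gt (mul_pos hapos hbpos)
  · rw [htop]; exact mul_pos hapos hbpos

lemma S12_xi_coeff {Lγ : Γ} (hL : 0 < Lγ) : (qe Lγ - qe (-Lγ)).coeff Lγ = 1 := by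
  have hne : -Lγ ≠ Lγ := ne_of_lt (neg_lt_self hL)
  rw [AddMonoidAlgebra.coeff_sub, Finsupp.sub_apply]
  simp [qe, AddMonoidAlgebra.coeff_single, Finsupp.single_apply, hne]

lemma S12_xi_supp {Lγ : Γ} (hL : 0 < Lγ) :
    ∀ γ ∈ (qe Lγ - qe (-Lγ)).coeff.support, γ ≤ Lγ := by
  intro γ hγ
  rw [AddMonoidAlgebra.coeff_sub] at hγ
  rcases Finset.mem_union.mp (Finsupp.support_sub hγ) with h | h
  · rw [qe, AddMonoidAlgebra.coeff_single] at h
    have h2 := Finsupp.support_single_subset h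
    simp only [Finset.mem_singleton] at h2
    exact le_of_eq h2
  · rw [qe, AddMonoidAlgebra.coeff_single] at h
    have h2 := Finsupp.support_single_subset h
    simp only [Finset.mem_singleton] at h2
    exact h2 ▸ le_of_lt (neg_lt_self hL)

lemma S12_xi_max {Lγ : Γ} (hL : 0 < Lγ) : (qe Lγ - qe (-Lγ)).coeff.support.max = ↑Lγ :=
  S12_max_of (by rw [S12_xi_coeff hL]; exact one_ne_zero) (S12_xi_supp hL)

lemma S12P_xi {Lγ : Γ} (hL : 0 < Lγ) : S12P (qe Lγ - qe (-Lγ)) :=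
  Or.inr ⟨Lγ, S12_xi_max hL, by rw [S12_xi_coeff hL]; exact one_pos⟩

lemma S12_Alt0_sub {x y : A Γ} (hx : x ∈ Alt0 Γ) (hy : y ∈ Alt0 Γ) : x - y ∈ Alt0 Γ := by
  intro γ hγ
  rw [AddMonoidAlgebra.coeff_sub] at hγ
  rcases Finset.mem_union.mp (Finsupp.support_sub hγ) with h | h
  · exact hx γ h
  · exact hy γ h

lemma S12_key {Lγ : Γ} (hL : 0 < Lγ) {α p r : A Γ} (hp : S12P p) (hr : S12P r)
    (h1 : α * (p + (qe Lγ - qe (-Lγ)) * r) ∈ Alt0 Γ) : α * p ∈ Alt0 Γ := by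
  rcases hr with rfl | ⟨mr, hrmax, hrpos⟩
  · simpa using h1
  by_cases hα : α = 0
  · subst hα
    rw [zero_mul]
    intro γ hγ
    simp at hγ
  obtain ⟨mα, hαmax⟩ := Finset.max_of_nonempty
    (Finsupp.support_nonempty_iff.mpr (fun h0 => hα (AddMonoidAlgebra.coeff_eq_zero.mp h0)))
  have hαne : α.coeff mα ≠ 0 := Finsupp.mem_support_iff.mp (Finset.mem_of_max hαmax)
  have hξr_top' : ((qe Lγ - qe (-Lγ)) * r).coeff (Lγ + mr) = r.coeff mr := by
    rw [S12_mul_apply_top (S12_xi_supp hL) (S12_le_of_max hrmax), S12_xi_coeff hL, one_mul]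
  have hξr_b : ∀ γ ∈ ((qe Lγ - qe (-Lγ)) * r).coeff.support, γ ≤ Lγ + mr :=
    S12_supp_mul_le (S12_xi_supp hL) (S12_le_of_max hrmax)
  have hξr_max : ((qe Lγ - qe (-Lγ)) * r).coeff.support.max = ↑(Lγ + mr) :=
    S12_max_of (by rw [hξr_top']; exact ne_of_gt hrpos) hξr_b
  obtain ⟨Mu, hu_max, hu_pos, hu_ge⟩ :=
    S12_add_strong hp hξr_max (by rw [hξr_top']; exact hrpos)
  have hαu : (α * (p + (qe Lγ - qe (-Lγ)) * r)).coeff (mα + Mu)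
      = α.coeff mα * (p + (qe Lγ - qe (-Lγ)) * r).coeff Mu :=
    S12_mul_apply_top (S12_le_of_max hαmax) (S12_le_of_max hu_max)
  have hne : (α * (p + (qe Lγ - qe (-Lγ)) * r)).coeff (mα + Mu) ≠ 0 := by
    rw [hαu]; exact mul_ne_zero hαne (ne_of_gt hu_pos)
  have hlt : mα + Mu < 0 := h1 _ (Finsupp.mem_support_iff.mpr hne)
  have hbig : (qe Lγ - qe (-Lγ)) * (α * r) ∈ Alt0 Γ := by
    intro γ hγ
    have h3 : ∀ δ ∈ (α * r).coeff.support, δ ≤ mα + mr :=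
      S12_supp_mul_le (S12_le_of_max hαmax) (S12_le_of_max hrmax)
    have h4 : γ ≤ Lγ + (mα + mr) := S12_supp_mul_le (S12_xi_supp hL) h3 γ hγ
    calc γ ≤ Lγ + (mα + mr) := h4
      _ = mα + (Lγ + mr) := by abel
      _ ≤ mα + Mu := add_le_add le_rfl hu_ge
      _ < 0 := hlt
  have heq : α * p = α * (p + (qe Lγ - qe (-Lγ)) * r) - (qe Lγ - qe (-Lγ)) * (α * r) := by
    ring
  rw [heq]
  exact S12_Alt0_sub h1 hbig


end S12aux

section S12hecke

variable {B W : Type} [Group W] {M : CoxeterMatrix B} {Γ : Type}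
  [AddCommGroup Γ] [LinearOrder Γ] [IsOrderedAddMonoid Γ] {H : Type} [Ring H] [Algebra (A Γ) H]

/-- `ξ_s = q^{L(s)} - q^{-L(s)}`. -/
def S12xi (d : KLData M W Γ H) (i : B) : A Γ :=
  qe (d.L (d.cs.simple i)) - qe (-(d.L (d.cs.simple i)))

lemma S12_L_pos (d : KLData M W Γ H) (i : B) : 0 < d.L (d.cs.simple i) := by
  apply d.L_pos
  intro hs
  have h1 := d.cs.length_simple i
  rw [hs, d.cs.length_one] at h1
  exact one_ne_zero h1.symm

lemma S12P_S12xi (d : KLData M W Γ H) (i : B) : S12P (S12xi d i) :=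
  S12P_xi (S12_L_pos d i)

lemma S12_T_one (d : KLData M W Γ H) : d.bT 1 = (1 : H) := by
  have h1 : d.bT (1 : W) * d.bT 1 = d.bT 1 := by
    have h2 := d.T_mul 1 1 (by simp [d.cs.length_one])
    simpa using h2
  have h2 : d.bT (1 : W) * d.bar (d.bT 1) = 1 := by
    have h3 := d.bar_T' 1
    rwa [inv_one] at h3
  calc d.bT (1 : W) = d.bT 1 * (d.bT 1 * d.bar (d.bT 1)) := by rw [h2, mul_one]
    _ = (d.bT 1 * d.bT 1) * d.bar (d.bT 1) := by rw [mul_assoc]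
    _ = 1 := by rw [h1, h2]

lemma S12_Ts_sq (d : KLData M W Γ H) (i : B) :
    d.bT (d.cs.simple i) * d.bT (d.cs.simple i)
      = 1 + S12xi d i • d.bT (d.cs.simple i) := by
  have hq : (d.bT (d.cs.simple i) + algebraMap (A Γ) H (qe (-(d.L (d.cs.simple i)))))
      * (d.bT (d.cs.simple i) - algebraMap (A Γ) H (qe (d.L (d.cs.simple i)))) = 0 :=
    d.T_quad i
  have hc : d.bT (d.cs.simple i) * algebraMap (A Γ) H (qe (d.L (d.cs.simple i)))
      = algebraMap (A Γ) H (qe (d.L (d.cs.simple i))) * d.bT (d.cs.simple i) :=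
    (Algebra.commutes _ _).symm
  have hm : algebraMap (A Γ) H (qe (-(d.L (d.cs.simple i))))
      * algebraMap (A Γ) H (qe (d.L (d.cs.simple i))) = 1 := by
    rw [← map_mul]
    have h5 : qe (-(d.L (d.cs.simple i))) * qe (d.L (d.cs.simple i)) = (1 : A Γ) := by
      rw [qe, qe, AddMonoidAlgebra.single_mul_single, neg_add_cancel, one_mul,
        ← AddMonoidAlgebra.one_def]
    rw [h5, map_one]
  have e1 : d.bT (d.cs.simple i) * d.bT (d.cs.simple i)
      = (d.bT (d.cs.simple i) + algebraMap (A Γ) H (qe (-(d.L (d.cs.simple i)))))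
          * (d.bT (d.cs.simple i) - algebraMap (A Γ) H (qe (d.L (d.cs.simple i))))
        + (d.bT (d.cs.simple i) * algebraMap (A Γ) H (qe (d.L (d.cs.simple i)))
            - algebraMap (A Γ) H (qe (-(d.L (d.cs.simple i)))) * d.bT (d.cs.simple i))
        + algebraMap (A Γ) H (qe (-(d.L (d.cs.simple i))))
            * algebraMap (A Γ) H (qe (d.L (d.cs.simple i))) := by
    noncomm_ring
  rw [hq, hc, hm, zero_add] at e1
  have e2 : S12xi d i • d.bT (d.cs.simple i)
      = algebraMap (A Γ) H (qe (d.L (d.cs.simple i))) * d.bT (d.cs.simple i)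
        - algebraMap (A Γ) H (qe (-(d.L (d.cs.simple i)))) * d.bT (d.cs.simple i) := by
    rw [Algebra.smul_def, S12xi, map_sub, sub_mul]
  rw [e1, e2]
  abel

lemma S12_mul_simple_eq_iff (d : KLData M W Γ H) (i : B) (z y : W) :
    z * d.cs.simple i = y ↔ z = y * d.cs.simple i := by
  constructor
  · rintro rfl
    rw [mul_assoc, d.cs.simple_mul_simple_self, mul_one]
  · rintro rfl
    rw [mul_assoc, d.cs.simple_mul_simple_self, mul_one]

lemma S12_simple_mul_eq_iff (d : KLData M W Γ H) (i : B) (z y : W) :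
    d.cs.simple i * z = y ↔ z = d.cs.simple i * y := by
  constructor
  · rintro rfl
    rw [← mul_assoc, d.cs.simple_mul_simple_self, one_mul]
  · rintro rfl
    rw [← mul_assoc, d.cs.simple_mul_simple_self, one_mul]

lemma S12_Tmul_asc (d : KLData M W Γ H) (i : B) (z : W)
    (hz : d.cs.length (z * d.cs.simple i) = d.cs.length z + 1) :
    d.bT z * d.bT (d.cs.simple i) = d.bT (z * d.cs.simple i) :=
  d.T_mul z _ (by rw [hz, d.cs.length_simple])

lemma S12_Tmul_desc (d : KLData M W Γ H) (i : B) (z : W)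
    (hz : d.cs.length (z * d.cs.simple i) + 1 = d.cs.length z) :
    d.bT z * d.bT (d.cs.simple i)
      = d.bT (z * d.cs.simple i) + S12xi d i • d.bT z := by
  have hzz : (z * d.cs.simple i) * d.cs.simple i = z := by
    rw [mul_assoc, d.cs.simple_mul_simple_self, mul_one]
  have h1 : d.bT (z * d.cs.simple i) * d.bT (d.cs.simple i) = d.bT z := by
    rw [S12_Tmul_asc d i (z * d.cs.simple i) (by rw [hzz]; omega), hzz]
  calc d.bT z * d.bT (d.cs.simple i)
      = (d.bT (z * d.cs.simple i) * d.bT (d.cs.simple i)) * d.bT (d.cs.simple i) := by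
        rw [h1]
    _ = d.bT (z * d.cs.simple i) * (d.bT (d.cs.simple i) * d.bT (d.cs.simple i)) := by
        rw [mul_assoc]
    _ = d.bT (z * d.cs.simple i) * (1 + S12xi d i • d.bT (d.cs.simple i)) := by
        rw [S12_Ts_sq]
    _ = d.bT (z * d.cs.simple i)
          + S12xi d i • (d.bT (z * d.cs.simple i) * d.bT (d.cs.simple i)) := by
        rw [mul_add, mul_one, mul_smul_comm]
    _ = _ := by rw [h1]

lemma S12_mulT_asc (d : KLData M W Γ H) (i : B) (z : W)
    (hz : d.cs.length (d.cs.simple i * z) = d.cs.length z + 1) :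
    d.bT (d.cs.simple i) * d.bT z = d.bT (d.cs.simple i * z) :=
  d.T_mul _ z (by rw [hz, d.cs.length_simple]; omega)

lemma S12_mulT_desc (d : KLData M W Γ H) (i : B) (z : W)
    (hz : d.cs.length (d.cs.simple i * z) + 1 = d.cs.length z) :
    d.bT (d.cs.simple i) * d.bT z
      = d.bT (d.cs.simple i * z) + S12xi d i • d.bT z := by
  have hzz : d.cs.simple i * (d.cs.simple i * z) = z := by
    rw [← mul_assoc, d.cs.simple_mul_simple_self, one_mul]
  have h1 : d.bT (d.cs.simple i) * d.bT (d.cs.simple i * z) = d.bT z := by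
    rw [S12_mulT_asc d i (d.cs.simple i * z) (by rw [hzz]; omega), hzz]
  calc d.bT (d.cs.simple i) * d.bT z
      = d.bT (d.cs.simple i) * (d.bT (d.cs.simple i) * d.bT (d.cs.simple i * z)) := by
        rw [h1]
    _ = (d.bT (d.cs.simple i) * d.bT (d.cs.simple i)) * d.bT (d.cs.simple i * z) := by
        rw [mul_assoc]
    _ = (1 + S12xi d i • d.bT (d.cs.simple i)) * d.bT (d.cs.simple i * z) := by
        rw [S12_Ts_sq]
    _ = d.bT (d.cs.simple i * z)
          + S12xi d i • (d.bT (d.cs.simple i) * d.bT (d.cs.simple i * z)) := by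
        rw [add_mul, one_mul, smul_mul_assoc]
    _ = _ := by rw [h1]

lemma S12_repr_mul_simple_asc (d : KLData M W Γ H) (i : B) (y : W)
    (hy : d.cs.length (y * d.cs.simple i) = d.cs.length y + 1) (h : H) :
    d.bT.repr (h * d.bT (d.cs.simple i)) y = d.bT.repr h (y * d.cs.simple i) := by
  have key : (d.bT.coord y).comp (LinearMap.mulRight (A Γ) (d.bT (d.cs.simple i)))
      = d.bT.coord (y * d.cs.simple i) := by
    apply d.bT.ext
    intro z
    simp only [LinearMap.comp_apply, LinearMap.mulRight_apply, Module.Basis.coord_apply]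
    rcases d.cs.length_mul_simple z i with hz | hz
    · rw [S12_Tmul_asc d i z hz]
      simp only [Module.Basis.repr_self, Finsupp.single_apply, S12_mul_simple_eq_iff d i z y]
    · have hzy : z ≠ y := by
        intro h'
        rw [h'] at hz
        omega
      rw [S12_Tmul_desc d i z hz, map_add, map_smul]
      simp only [Module.Basis.repr_self, Finsupp.add_apply, Finsupp.smul_apply, smul_eq_mul,
        Finsupp.single_apply, S12_mul_simple_eq_iff d i z y, if_neg hzy, mul_zero, add_zero]
  simpa only [LinearMap.comp_apply, LinearMap.mulRight_apply, Module.Basis.coord_apply]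
    using DFunLike.congr_fun key h

lemma S12_repr_mul_simple_desc (d : KLData M W Γ H) (i : B) (y : W)
    (hy : d.cs.length (y * d.cs.simple i) + 1 = d.cs.length y) (h : H) :
    d.bT.repr (h * d.bT (d.cs.simple i)) y
      = d.bT.repr h (y * d.cs.simple i) + S12xi d i * d.bT.repr h y := by
  have key : (d.bT.coord y).comp (LinearMap.mulRight (A Γ) (d.bT (d.cs.simple i)))
      = d.bT.coord (y * d.cs.simple i) + S12xi d i • d.bT.coord y := by
    apply d.bT.ext
    intro z
    simp only [LinearMap.comp_apply, LinearMap.mulRight_apply, LinearMap.add_apply,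
      LinearMap.smul_apply, Module.Basis.coord_apply]
    rcases d.cs.length_mul_simple z i with hz | hz
    · have hzy : z ≠ y := by
        intro h'
        rw [h'] at hz
        omega
      rw [S12_Tmul_asc d i z hz]
      simp only [Module.Basis.repr_self, Finsupp.single_apply, smul_eq_mul,
        S12_mul_simple_eq_iff d i z y, if_neg hzy, mul_zero, add_zero]
    · rw [S12_Tmul_desc d i z hz, map_add, map_smul]
      simp only [Module.Basis.repr_self, Finsupp.add_apply, Finsupp.smul_apply, smul_eq_mul,
        Finsupp.single_apply, S12_mul_simple_eq_iff d i z y]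
  have h2 := DFunLike.congr_fun key h
  simpa only [LinearMap.comp_apply, LinearMap.mulRight_apply, LinearMap.add_apply,
    LinearMap.smul_apply, Module.Basis.coord_apply, smul_eq_mul] using h2

lemma S12_repr_simple_mul_asc (d : KLData M W Γ H) (i : B) (y : W)
    (hy : d.cs.length (d.cs.simple i * y) = d.cs.length y + 1) (h : H) :
    d.bT.repr (d.bT (d.cs.simple i) * h) y = d.bT.repr h (d.cs.simple i * y) := by
  have key : (d.bT.coord y).comp (LinearMap.mulLeft (A Γ) (d.bT (d.cs.simple i)))
      = d.bT.coord (d.cs.simple i * y) := by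
    apply d.bT.ext
    intro z
    simp only [LinearMap.comp_apply, LinearMap.mulLeft_apply, Module.Basis.coord_apply]
    rcases d.cs.length_simple_mul z i with hz | hz
    · rw [S12_mulT_asc d i z hz]
      simp only [Module.Basis.repr_self, Finsupp.single_apply, S12_simple_mul_eq_iff d i z y]
    · have hzy : z ≠ y := by
        intro h'
        rw [h'] at hz
        omega
      rw [S12_mulT_desc d i z hz, map_add, map_smul]
      simp only [Module.Basis.repr_self, Finsupp.add_apply, Finsupp.smul_apply, smul_eq_mul,
        Finsupp.single_apply, S12_simple_mul_eq_iff d i z y, if_neg hzy, mul_zero, add_zero]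
  simpa only [LinearMap.comp_apply, LinearMap.mulLeft_apply, Module.Basis.coord_apply]
    using DFunLike.congr_fun key h

lemma S12_repr_simple_mul_desc (d : KLData M W Γ H) (i : B) (y : W)
    (hy : d.cs.length (d.cs.simple i * y) + 1 = d.cs.length y) (h : H) :
    d.bT.repr (d.bT (d.cs.simple i) * h) y
      = d.bT.repr h (d.cs.simple i * y) + S12xi d i * d.bT.repr h y := by
  have key : (d.bT.coord y).comp (LinearMap.mulLeft (A Γ) (d.bT (d.cs.simple i)))
      = d.bT.coord (d.cs.simple i * y) + S12xi d i • d.bT.coord y := by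
    apply d.bT.ext
    intro z
    simp only [LinearMap.comp_apply, LinearMap.mulLeft_apply, LinearMap.add_apply,
      LinearMap.smul_apply, Module.Basis.coord_apply]
    rcases d.cs.length_simple_mul z i with hz | hz
    · have hzy : z ≠ y := by
        intro h'
        rw [h'] at hz
        omega
      rw [S12_mulT_asc d i z hz]
      simp only [Module.Basis.repr_self, Finsupp.single_apply, smul_eq_mul,
        S12_simple_mul_eq_iff d i z y, if_neg hzy, mul_zero, add_zero]
    · rw [S12_mulT_desc d i z hz, map_add, map_smul]
      simp only [Module.Basis.repr_self, Finsupp.add_apply, Finsupp.smul_apply, smul_eq_mul,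
        Finsupp.single_apply, S12_simple_mul_eq_iff d i z y]
  have h2 := DFunLike.congr_fun key h
  simpa only [LinearMap.comp_apply, LinearMap.mulLeft_apply, LinearMap.add_apply,
    LinearMap.smul_apply, Module.Basis.coord_apply, smul_eq_mul] using h2

/-- all `T`-coefficients have positive leading coefficient (or vanish). -/
def S12PosH (d : KLData M W Γ H) (h : H) : Prop := ∀ z : W, S12P (d.bT.repr h z)

lemma S12PosH_T (d : KLData M W Γ H) (w : W) : S12PosH d (d.bT w) := by
  intro z
  rw [Module.Basis.repr_self, Finsupp.single_apply]
  by_cases h : w = z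
  · rw [if_pos h]
    exact S12P_one
  · rw [if_neg h]
    exact S12P_zero

lemma S12PosH_mul_simple (d : KLData M W Γ H) {h : H} (hh : S12PosH d h) (i : B) :
    S12PosH d (h * d.bT (d.cs.simple i)) := by
  intro y
  rcases d.cs.length_mul_simple y i with hy | hy
  · rw [S12_repr_mul_simple_asc d i y hy h]
    exact hh _
  · rw [S12_repr_mul_simple_desc d i y hy h]
    exact S12P_add (hh _) (S12P_mul (S12P_S12xi d i) (hh _))

lemma S12PosH_mul_T (d : KLData M W Γ H) {h : H} (hh : S12PosH d h) (w : W) :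
    S12PosH d (h * d.bT w) := by
  suffices key : ∀ n (w : W), d.cs.length w ≤ n → S12PosH d (h * d.bT w) from
    key _ w le_rfl
  intro n
  induction n with
  | zero =>
    intro w hw
    have h1 : w = 1 := d.cs.length_eq_zero_iff.mp (Nat.le_zero.mp hw)
    rw [h1, S12_T_one d, mul_one]
    exact hh
  | succ n IH =>
    intro w hw
    by_cases h1 : w = 1
    · rw [h1, S12_T_one d, mul_one]
      exact hh
    · obtain ⟨i, hi⟩ := d.cs.exists_rightDescent_of_ne_one h1
      have hi' : d.cs.length (w * d.cs.simple i) < d.cs.length w := hi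
      have hlen : d.cs.length (w * d.cs.simple i) + 1 = d.cs.length w := by
        rcases d.cs.length_mul_simple w i with h2 | h2
        · omega
        · exact h2
      have hws : (w * d.cs.simple i) * d.cs.simple i = w := by
        rw [mul_assoc, d.cs.simple_mul_simple_self, mul_one]
      have hT : d.bT w = d.bT (w * d.cs.simple i) * d.bT (d.cs.simple i) := by
        rw [S12_Tmul_asc d i (w * d.cs.simple i) (by rw [hws]; omega), hws]
      rw [hT, ← mul_assoc]
      exact S12PosH_mul_simple d (IH (w * d.cs.simple i) (by omega)) i

lemma S12_repr_smul (d : KLData M W Γ H) (α : A Γ) (x : H) (w : W) :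
    d.bT.repr (α • x) w = α * d.bT.repr x w := by
  rw [map_smul, Finsupp.smul_apply, smul_eq_mul]

lemma S12_step_right (d : KLData M W Γ H) {g : H} (hg : S12PosH d g) {α : A Γ} {i : B}
    (h1 : α • (g * d.bT (d.cs.simple i)) ∈ d.Hlt0) : α • g ∈ d.Hlt0 := by
  simp only [KLData.Hlt0, Set.mem_setOf_eq] at h1 ⊢
  intro z
  rw [S12_repr_smul]
  have hzz : (z * d.cs.simple i) * d.cs.simple i = z := by
    rw [mul_assoc, d.cs.simple_mul_simple_self, mul_one]
  rcases d.cs.length_mul_simple z i with hz | hz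
  · -- z ascent
    have hdesc : d.cs.length ((z * d.cs.simple i) * d.cs.simple i) + 1
        = d.cs.length (z * d.cs.simple i) := by
      rw [hzz]; omega
    have e1 : d.bT.repr (g * d.bT (d.cs.simple i)) (z * d.cs.simple i)
        = d.bT.repr g z + S12xi d i * d.bT.repr g (z * d.cs.simple i) := by
      have h2 := S12_repr_mul_simple_desc d i (z * d.cs.simple i) hdesc g
      rwa [hzz] at h2
    have h3 := h1 (z * d.cs.simple i)
    rw [S12_repr_smul, e1] at h3
    exact S12_key (S12_L_pos d i) (hg z) (hg (z * d.cs.simple i)) h3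
  · -- z descent
    have hasc : d.cs.length ((z * d.cs.simple i) * d.cs.simple i)
        = d.cs.length (z * d.cs.simple i) + 1 := by
      rw [hzz]; omega
    have h3 := h1 (z * d.cs.simple i)
    rwa [S12_repr_smul, S12_repr_mul_simple_asc d i (z * d.cs.simple i) hasc g, hzz] at h3

lemma S12_step_left (d : KLData M W Γ H) {g : H} (hg : S12PosH d g) {α : A Γ} {i : B}
    (h1 : α • (d.bT (d.cs.simple i) * g) ∈ d.Hlt0) : α • g ∈ d.Hlt0 := by
  simp only [KLData.Hlt0, Set.mem_setOf_eq] at h1 ⊢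
  intro z
  rw [S12_repr_smul]
  have hzz : d.cs.simple i * (d.cs.simple i * z) = z := by
    rw [← mul_assoc, d.cs.simple_mul_simple_self, one_mul]
  rcases d.cs.length_simple_mul z i with hz | hz
  · -- z ascent
    have hdesc : d.cs.length (d.cs.simple i * (d.cs.simple i * z)) + 1
        = d.cs.length (d.cs.simple i * z) := by
      rw [hzz]; omega
    have e1 : d.bT.repr (d.bT (d.cs.simple i) * g) (d.cs.simple i * z)
        = d.bT.repr g z + S12xi d i * d.bT.repr g (d.cs.simple i * z) := by
      have h2 := S12_repr_simple_mul_desc d i (d.cs.simple i * z) hdesc g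
      rwa [hzz] at h2
    have h3 := h1 (d.cs.simple i * z)
    rw [S12_repr_smul, e1] at h3
    exact S12_key (S12_L_pos d i) (hg z) (hg (d.cs.simple i * z)) h3
  · -- z descent
    have hasc : d.cs.length (d.cs.simple i * (d.cs.simple i * z))
        = d.cs.length (d.cs.simple i * z) + 1 := by
      rw [hzz]; omega
    have h3 := h1 (d.cs.simple i * z)
    rwa [S12_repr_smul, S12_repr_simple_mul_asc d i (d.cs.simple i * z) hasc g, hzz] at h3

lemma S12_peel_right (d : KLData M W Γ H) (b d' : W) (α : A Γ) :
    ∀ n (v u' : W), d.cs.length v ≤ n →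
      d.cs.length (u' * v) = d.cs.length u' + d.cs.length v →
      α • (d.T b * d.T d' * d.T (u' * v)) ∈ d.Hlt0 →
      α • (d.T b * d.T d' * d.T u') ∈ d.Hlt0 := by
  intro n
  induction n with
  | zero =>
    intro v u' hv _ hmem
    have h1 : v = 1 := d.cs.length_eq_zero_iff.mp (Nat.le_zero.mp hv)
    rwa [h1, mul_one] at hmem
  | succ n IH =>
    intro v u' hv hlen hmem
    by_cases h1 : v = 1
    · rwa [h1, mul_one] at hmem
    obtain ⟨i, hi⟩ := d.cs.exists_rightDescent_of_ne_one h1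
    have hi' : d.cs.length (v * d.cs.simple i) < d.cs.length v := hi
    have hlv : d.cs.length (v * d.cs.simple i) + 1 = d.cs.length v := by
      rcases d.cs.length_mul_simple v i with h2 | h2
      · omega
      · exact h2
    have hvs : (v * d.cs.simple i) * d.cs.simple i = v := by
      rw [mul_assoc, d.cs.simple_mul_simple_self, mul_one]
    have ha3 : (u' * (v * d.cs.simple i)) * d.cs.simple i = u' * v := by
      rw [mul_assoc, hvs]
    have hl1 : d.cs.length (u' * (v * d.cs.simple i))
        = d.cs.length u' + d.cs.length (v * d.cs.simple i) := by
      have a1 := d.cs.length_mul_le u' (v * d.cs.simple i)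
      have a2 := d.cs.length_mul_le (u' * (v * d.cs.simple i)) (d.cs.simple i)
      rw [d.cs.length_simple, ha3] at a2
      omega
    have hasc : d.cs.length ((u' * (v * d.cs.simple i)) * d.cs.simple i)
        = d.cs.length (u' * (v * d.cs.simple i)) + 1 := by
      rw [ha3]
      omega
    have hT : d.T (u' * v) = d.T (u' * (v * d.cs.simple i)) * d.bT (d.cs.simple i) := by
      show d.bT (u' * v) = d.bT (u' * (v * d.cs.simple i)) * d.bT (d.cs.simple i)
      rw [S12_Tmul_asc d i (u' * (v * d.cs.simple i)) hasc, ha3]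
    apply IH (v * d.cs.simple i) u' (by omega) hl1
    apply S12_step_right d (g := d.T b * d.T d' * d.T (u' * (v * d.cs.simple i)))
    · show S12PosH d (d.bT b * d.bT d' * d.bT (u' * (v * d.cs.simple i)))
      exact S12PosH_mul_T d (S12PosH_mul_T d (S12PosH_T d b) d') _
    · rwa [hT, ← mul_assoc] at hmem

lemma S12_peel_left (d : KLData M W Γ H) (d' u' : W) (α : A Γ) :
    ∀ n (x b' : W), d.cs.length x ≤ n →
      d.cs.length (x * b') = d.cs.length x + d.cs.length b' →
      α • (d.T (x * b') * d.T d' * d.T u') ∈ d.Hlt0 →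
      α • (d.T b' * d.T d' * d.T u') ∈ d.Hlt0 := by
  intro n
  induction n with
  | zero =>
    intro x b' hx _ hmem
    have h1 : x = 1 := d.cs.length_eq_zero_iff.mp (Nat.le_zero.mp hx)
    rwa [h1, one_mul] at hmem
  | succ n IH =>
    intro x b' hx hlen hmem
    by_cases h1 : x = 1
    · rwa [h1, one_mul] at hmem
    obtain ⟨i, hi⟩ := d.cs.exists_leftDescent_of_ne_one h1
    have hi' : d.cs.length (d.cs.simple i * x) < d.cs.length x := hi
    have hlx : d.cs.length (d.cs.simple i * x) + 1 = d.cs.length x := by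
      rcases d.cs.length_simple_mul x i with h2 | h2
      · omega
      · exact h2
    have hxs : d.cs.simple i * (d.cs.simple i * x) = x := by
      rw [← mul_assoc, d.cs.simple_mul_simple_self, one_mul]
    have ha3 : d.cs.simple i * ((d.cs.simple i * x) * b') = x * b' := by
      rw [← mul_assoc, ← mul_assoc, d.cs.simple_mul_simple_self, one_mul]
    have hl1 : d.cs.length ((d.cs.simple i * x) * b')
        = d.cs.length (d.cs.simple i * x) + d.cs.length b' := by
      have a1 := d.cs.length_mul_le (d.cs.simple i * x) b'
      have a2 := d.cs.length_mul_le (d.cs.simple i) ((d.cs.simple i * x) * b')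
      rw [d.cs.length_simple, ha3] at a2
      omega
    have hasc : d.cs.length (d.cs.simple i * ((d.cs.simple i * x) * b'))
        = d.cs.length ((d.cs.simple i * x) * b') + 1 := by
      rw [ha3]
      omega
    have hT : d.T (x * b') = d.bT (d.cs.simple i) * d.T ((d.cs.simple i * x) * b') := by
      show d.bT (x * b') = d.bT (d.cs.simple i) * d.bT ((d.cs.simple i * x) * b')
      rw [S12_mulT_asc d i ((d.cs.simple i * x) * b') hasc, ha3]
    apply IH (d.cs.simple i * x) b' (by omega) hl1
    apply S12_step_left d (g := d.T ((d.cs.simple i * x) * b') * d.T d' * d.T u')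
    · show S12PosH d (d.bT ((d.cs.simple i * x) * b') * d.bT d' * d.bT u')
      exact S12PosH_mul_T d (S12PosH_mul_T d (S12PosH_T d _) d') _
    · have e1 : d.T (x * b') * d.T d' * d.T u'
          = d.bT (d.cs.simple i) * (d.T ((d.cs.simple i * x) * b') * d.T d' * d.T u') := by
        rw [hT]
        noncomm_ring
      rwa [e1] at hmem

end S12hecke

/-- if `α T_b T_{d'} T_u ∈ H_{<0}`, then
`α T_{b'} T_{d'} T_{u'} ∈ H_{<0}` whenever `b'⁻¹ ≤_D b⁻¹` and `u' ≤_D u`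
(Duflo order). -/
theorem statement_12 {B W : Type} [Group W] {M : CoxeterMatrix B} {Γ : Type}
    [AddCommGroup Γ] [LinearOrder Γ] [IsOrderedAddMonoid Γ] {H : Type} [Ring H] [Algebra (A Γ) H]
    (d : KLData M W Γ H) (b d' u : W) (α : A Γ)
    (h : α • (d.T b * d.T d' * d.T u) ∈ d.Hlt0) :
    ∀ b' u' : W, d.dufloLE b'⁻¹ b⁻¹ → d.dufloLE u' u →
      α • (d.T b' * d.T d' * d.T u') ∈ d.Hlt0 := by
  intro b' u' hb hu
  have hu' : d.cs.length u' + d.cs.length (u'⁻¹ * u) = d.cs.length u := hu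
  have hb' : d.cs.length b'⁻¹ + d.cs.length (b'⁻¹⁻¹ * b⁻¹) = d.cs.length b⁻¹ := hb
  rw [inv_inv] at hb'
  have huv : u' * (u'⁻¹ * u) = u := by rw [mul_inv_cancel_left]
  have hlen_uv : d.cs.length (u' * (u'⁻¹ * u))
      = d.cs.length u' + d.cs.length (u'⁻¹ * u) := by
    rw [huv]
    omega
  have step1 : α • (d.T b * d.T d' * d.T u') ∈ d.Hlt0 := by
    apply S12_peel_right d b d' α (d.cs.length (u'⁻¹ * u)) (u'⁻¹ * u) u' le_rfl hlen_uv
    rwa [huv]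
  have hxb : (b * b'⁻¹) * b' = b := inv_mul_cancel_right b b'
  have hlinv : d.cs.length (b * b'⁻¹) = d.cs.length (b' * b⁻¹) := by
    have h3 := d.cs.length_inv (b * b'⁻¹)
    rw [mul_inv_rev, inv_inv] at h3
    exact h3.symm
  have e1 : d.cs.length b'⁻¹ = d.cs.length b' := d.cs.length_inv b'
  have e2 : d.cs.length b⁻¹ = d.cs.length b := d.cs.length_inv b
  have hlen_x : d.cs.length ((b * b'⁻¹) * b')
      = d.cs.length (b * b'⁻¹) + d.cs.length b' := by
    rw [hxb, hlinv]
    omega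
  apply S12_peel_left d d' u' α (d.cs.length (b * b'⁻¹)) (b * b'⁻¹) b' le_rfl hlen_x
  rwa [hxb]
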